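/- (Corollary 2) Let [n_1,…,n_s] be a multiset of integers ≥ 2. Then the reciprocal polynomial satisfies χ_{[n_1,…,n_s]}^* = ±χ_{[n_1,…,n_s]}; moreover χ_{[n_1,…,n_s]} is self-reciprocal (χ^* = χ) if and only if gcd(s, n_1,…,n_s) is odd. -/

import Mathlib

open Matrix Polynomial

/-- The Coxeter matrix `Φ_[n]` of the linearly oriented quiver of type `A_{n-1}`:
the `(n-1) × (n-1)` integer matrix whose `(i,j)`-entry is `1` if `j = i + 1`
(for rows other than the last), whose last row has all entries `-1`, and whose
other entries are `0`. -/
def PhiA (n : ℕ) : Matrix (Fin (n - 1)) (Fin (n - 1)) ℤ :=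
  fun i j =>
    if (i : ℕ) = n - 2 then -1
    else if (j : ℕ) = (i : ℕ) + 1 then 1 else 0

/-- The Kronecker (tensor) product `Φ_{[n_1,…,n_s]} = Φ_{[n_1]} ⊗ ⋯ ⊗ Φ_{[n_s]}`,
realized on the index type `Π i, Fin (n i - 1)`. -/
def PhiProd {s : ℕ} (n : Fin s → ℕ) :
    Matrix ((i : Fin s) → Fin (n i - 1)) ((i : Fin s) → Fin (n i - 1)) ℤ :=
  fun x y => ∏ i, PhiA (n i) (x i) (y i)

/-- The characteristic polynomial `χ_{[n_1,…,n_s]} ∈ ℤ[X]` of `Φ_{[n_1,…,n_s]}`. -/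
noncomputable def Chi {s : ℕ} (n : Fin s → ℕ) : Polynomial ℤ :=
  (PhiProd n).charpoly

/-- The standard primitive complex `m`-th root of unity `exp(2π√-1/m)`. -/
noncomputable def zeta (m : ℕ) : ℂ := Complex.exp (2 * Real.pi * Complex.I / m)

set_option linter.unusedSectionVars false

def flipA (n : ℕ) : Matrix (Fin (n - 1)) (Fin (n - 1)) ℤ :=
  fun i j => if (i : ℕ) + (j : ℕ) = n - 2 then 1 else 0

def PhiInvA (n : ℕ) : Matrix (Fin (n - 1)) (Fin (n - 1)) ℤ :=
  fun i j => if (i : ℕ) = 0 then -1 else if (j : ℕ) + 1 = (i : ℕ) then 1 else 0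

lemma sum_single_index {N c : ℕ} (hc : c < N) (f : Fin N → ℤ)
    (hf : ∀ k : Fin N, (k : ℕ) ≠ c → f k = 0) : ∑ k, f k = f ⟨c, hc⟩ :=
  Finset.sum_eq_single ⟨c, hc⟩ (fun k _ hk => hf k (by simpa [Fin.ext_iff] using hk))
    (by simp)

lemma flip_mul_flip (n : ℕ) : flipA n * flipA n = 1 := by
  ext i j
  have hi := i.isLt; have hj := j.isLt
  rw [Matrix.mul_apply, Matrix.one_apply]
  rw [sum_single_index (c := n - 2 - (i : ℕ)) (by omega)
    _ (fun k hk => by simp only [flipA]; rw [if_neg (by omega)]; ring)]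
  simp only [flipA, Fin.ext_iff]
  split_ifs <;> omega

lemma flip_phi_flip (n : ℕ) : flipA n * PhiA n * flipA n = PhiInvA n := by
  have h1 : ∀ i j : Fin (n - 1), (flipA n * PhiA n) i j = PhiA n ⟨n - 2 - (i : ℕ), by omega⟩ j := by
    intro i j
    have hi := i.isLt
    rw [Matrix.mul_apply]
    rw [sum_single_index (c := n - 2 - (i : ℕ)) (by omega)
      _ (fun k hk => by simp only [flipA]; rw [if_neg (by omega)]; ring)]
    simp only [flipA]
    rw [if_pos (show (i : ℕ) + (n - 2 - (i : ℕ)) = n - 2 by omega), one_mul]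
  ext i j
  have hi := i.isLt; have hj := j.isLt
  rw [Matrix.mul_apply]
  rw [sum_single_index (c := n - 2 - (j : ℕ)) (by omega)
    _ (fun k hk => by simp only [flipA]; rw [if_neg (by omega)]; ring)]
  rw [h1]
  simp only [PhiA, PhiInvA, flipA]
  split_ifs <;> omega

lemma phi_mul_phiInv (n : ℕ) : PhiA n * PhiInvA n = 1 := by
  ext i j
  have hi := i.isLt; have hj := j.isLt
  rw [Matrix.mul_apply, Matrix.one_apply]
  by_cases hlast : (i : ℕ) = n - 2
  · -- last row of PhiA: all entries -1
    have hrow : ∀ k : Fin (n-1), PhiA n i k * PhiInvA n k j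
        = (if (k : ℕ) = 0 then (1:ℤ) else 0)
            + (if (k : ℕ) ≠ 0 ∧ (j : ℕ) + 1 = (k : ℕ) then (-1:ℤ) else 0) := by
      intro k
      simp only [PhiA, PhiInvA, if_pos hlast]
      split_ifs <;> omega
    rw [Finset.sum_congr rfl (fun k _ => hrow k), Finset.sum_add_distrib]
    rw [sum_single_index (c := 0) (by omega) _ (fun k hk => if_neg hk)]
    by_cases hj2 : (j : ℕ) + 1 < n - 1
    · rw [sum_single_index (c := (j : ℕ) + 1) hj2
        _ (fun k hk => if_neg (by omega))]
      simp only [Fin.val_mk, Fin.ext_iff, ne_eq, if_true, and_true, not_true, not_false_iff, ite_not]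
      split_ifs <;> first | omega | tauto
    · rw [Finset.sum_eq_zero (fun k _ => if_neg (by have := k.isLt; omega))]
      simp only [Fin.val_mk, Fin.ext_iff, ne_eq, if_true, and_true, not_true, not_false_iff, ite_not]
      split_ifs <;> first | omega | tauto
  · rw [sum_single_index (c := (i : ℕ) + 1) (by omega)
      _ (fun k hk => by simp only [PhiA]; rw [if_neg hlast, if_neg (by omega)]; ring)]
    simp only [PhiA, PhiInvA, Fin.val_mk, Fin.ext_iff, ne_eq, if_true, and_true, not_true,
      not_false_iff, ite_not]
    split_ifs <;> first | omega | tauto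

lemma det_PhiA {n : ℕ} (hn : 2 ≤ n) : (PhiA n).det = (-1) ^ (n - 1) := by
  obtain ⟨m, hm⟩ : ∃ m, n - 1 = m + 1 := ⟨n - 2, by omega⟩
  rw [← Matrix.det_submatrix_equiv_self (finCongr hm.symm) (PhiA n)]
  rw [Matrix.det_succ_column_zero]
  rw [Finset.sum_eq_single (Fin.last m)]
  · have h0 : (PhiA n).submatrix (finCongr hm.symm) (finCongr hm.symm) (Fin.last m) 0 = -1 := by
      simp only [Matrix.submatrix_apply, PhiA, finCongr_apply, Fin.coe_cast, Fin.val_last]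
      rw [if_pos (by omega)]
    rw [h0]
    have hsub : ((PhiA n).submatrix (finCongr hm.symm) (finCongr hm.symm)).submatrix (Fin.last m).succAbove Fin.succ
        = (1 : Matrix (Fin m) (Fin m) ℤ) := by
      ext a b
      simp only [Matrix.submatrix_apply, Fin.succAbove_last, PhiA, finCongr_apply,
        Fin.coe_cast, Fin.coe_castSucc, Fin.val_succ, Matrix.one_apply, Fin.ext_iff]
      have ha := a.isLt; have hb := b.isLt
      rw [if_neg (by omega)]
      split_ifs <;> omega
    rw [hsub, Matrix.det_one, Fin.val_last]
    have : ((-1 : ℤ)) ^ m * -1 * 1 = (-1) ^ (m + 1) := by ring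
    rw [this, ← hm]
  · intro k _ hk
    have : (PhiA n).submatrix (finCongr hm.symm) (finCongr hm.symm) k 0 = 0 := by
      simp only [Matrix.submatrix_apply, PhiA, finCongr_apply, Fin.coe_cast]
      have hk' : (k : ℕ) ≠ m := fun h => hk (Fin.ext (by simp [h]))
      have := k.isLt
      rw [if_neg (by omega), if_neg (by simp)]
    rw [this]; ring
  · intro h; exact absurd (Finset.mem_univ _) h

section Kron
variable {ι : Type*} [Fintype ι] [DecidableEq ι] {β : ι → Type*}
  [∀ i, Fintype (β i)] [∀ i, DecidableEq (β i)]

def kron (A : ∀ i, Matrix (β i) (β i) ℤ) : Matrix (∀ i, β i) (∀ i, β i) ℤ :=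
  fun x y => ∏ i, A i (x i) (y i)

lemma prod_ite_eq_ite (f g : ∀ i, β i) :
    (∏ i, if f i = g i then (1:ℤ) else 0) = if f = g then 1 else 0 := by
  by_cases h : f = g
  · simp [h]
  · obtain ⟨i, hi⟩ := Function.ne_iff.mp h
    rw [if_neg h]
    exact Finset.prod_eq_zero (Finset.mem_univ i) (if_neg hi)

lemma kron_mul (A B : ∀ i, Matrix (β i) (β i) ℤ) :
    kron A * kron B = kron (fun i => A i * B i) := by
  ext x y
  simp only [Matrix.mul_apply, kron]
  rw [Finset.prod_univ_sum, Fintype.piFinset_univ]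
  exact Finset.sum_congr rfl fun z _ => (Finset.prod_mul_distrib).symm

lemma kron_one : kron (fun i => (1 : Matrix (β i) (β i) ℤ)) = 1 := by
  ext x y
  simp only [kron, Matrix.one_apply]
  exact prod_ite_eq_ite x y

lemma det_kron_update (i : ι) (A : Matrix (β i) (β i) ℤ) :
    (kron (Function.update (fun j => (1 : Matrix (β j) (β j) ℤ)) i A)).det
      = A.det ^ (Fintype.card (∀ j : { j // j ≠ i }, β j)) := by
  classical
  rw [← Matrix.det_submatrix_equiv_self (Equiv.piSplitAt i β).symm]
  have hsub : (kron (Function.update (fun j => (1 : Matrix (β j) (β j) ℤ)) i A)).submatrix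
        (Equiv.piSplitAt i β).symm (Equiv.piSplitAt i β).symm
      = Matrix.blockDiagonal (fun _ : (∀ j : { j // j ≠ i }, β j) => A) := by
    ext ⟨a, f⟩ ⟨b, g⟩
    simp only [Matrix.submatrix_apply, kron, Matrix.blockDiagonal_apply]
    rw [← Finset.prod_erase_mul _ _ (Finset.mem_univ i)]
    have hvi : ∀ (p : β i × ∀ j : { j // j ≠ i }, β j), (Equiv.piSplitAt i β).symm p i = p.1 := by
      intro p; simp [Equiv.piSplitAt]
    have hvj : ∀ (p : β i × ∀ j : { j // j ≠ i }, β j) (j : ι) (hj : j ≠ i),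
        (Equiv.piSplitAt i β).symm p j = p.2 ⟨j, hj⟩ := by
      intro p j hj; simp [Equiv.piSplitAt, hj]
    rw [Function.update_self, hvi, hvi]
    have hrest : (∏ j ∈ Finset.univ.erase i,
        (Function.update (fun j => (1 : Matrix (β j) (β j) ℤ)) i A) j
          ((Equiv.piSplitAt i β).symm (a, f) j) ((Equiv.piSplitAt i β).symm (b, g) j))
        = if f = g then 1 else 0 := by
      rw [Finset.prod_subtype (Finset.univ.erase i)
        (p := fun j => j ≠ i) (fun x => by simp [Finset.mem_erase])]
      rw [← prod_ite_eq_ite f g]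
      apply Finset.prod_congr rfl
      intro j _
      rcases j with ⟨j, hj⟩
      rw [Function.update_of_ne hj, hvj _ _ hj, hvj _ _ hj, Matrix.one_apply]
    rw [hrest]
    by_cases h : f = g
    · rw [if_pos h, if_pos h, one_mul]
    · rw [if_neg h, if_neg h, zero_mul]
  rw [hsub, Matrix.det_blockDiagonal, Finset.prod_const, Finset.card_univ]

lemma det_kron_aux (A : ∀ i, Matrix (β i) (β i) ℤ) (t : Finset ι) :
    (kron (fun j => if j ∈ t then A j else 1)).det
      = ∏ i ∈ t, (A i).det ^ (Fintype.card (∀ j : { j // j ≠ i }, β j)) := by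
  classical
  induction t using Finset.induction_on with
  | empty => simp [kron_one]
  | insert a t' hx ih =>
      have hsplit : (fun j => if j ∈ insert a t' then A j else 1)
          = fun j => (if j ∈ t' then A j else 1) *
              (Function.update (fun j' => (1 : Matrix (β j') (β j') ℤ)) a (A a)) j := by
        ext j
        by_cases hj : j = a
        · subst hj
          rw [Function.update_self, if_pos (Finset.mem_insert_self _ _), if_neg hx, one_mul]
        · rw [Function.update_of_ne hj, mul_one]
          congr 1
          simp [Finset.mem_insert, hj]
      rw [hsplit, ← kron_mul, Matrix.det_mul, ih, det_kron_update,
        Finset.prod_insert hx, mul_comm]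

lemma det_kron (A : ∀ i, Matrix (β i) (β i) ℤ) :
    (kron A).det = ∏ i, (A i).det ^ (Fintype.card (∀ j : { j // j ≠ i }, β j)) := by
  classical
  have := det_kron_aux A Finset.univ
  simpa using this

end Kron


section Main
variable {s : ℕ} (n : Fin s → ℕ)

lemma phiProd_eq_kron : PhiProd n = kron (fun i => PhiA (n i)) := rfl

lemma flip_sq : kron (fun i => flipA (n i)) * kron (fun i => flipA (n i)) = 1 := by
  rw [kron_mul]
  have : (fun i => flipA (n i) * flipA (n i)) = fun i : Fin s => (1 : Matrix _ _ ℤ) := by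
    ext1 i; rw [flip_mul_flip]
  rw [this, kron_one]

lemma phi_inv_eq : PhiProd n *
    (kron (fun i => flipA (n i)) * PhiProd n * kron (fun i => flipA (n i))) = 1 := by
  rw [phiProd_eq_kron]
  have e1 : kron (fun i => flipA (n i)) * kron (fun i => PhiA (n i)) * kron (fun i => flipA (n i))
      = kron (fun i : Fin s => PhiInvA (n i)) := by
    rw [kron_mul, kron_mul]
    have : (fun i : Fin s => flipA (n i) * PhiA (n i) * flipA (n i))
        = fun i : Fin s => PhiInvA (n i) := funext fun i => flip_phi_flip (n i)
    rw [this]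
  rw [e1, kron_mul]
  have e2 : (fun i => PhiA (n i) * PhiInvA (n i)) = fun i : Fin s => (1 : Matrix _ _ ℤ) := by
    ext1 i; exact phi_mul_phiInv (n i)
  rw [e2, kron_one]

lemma det_phiProd (hn : ∀ i, 2 ≤ n i) :
    (PhiProd n).det = (-1) ^ (s * ∏ i, (n i - 1)) := by
  rw [phiProd_eq_kron, det_kron]
  have hcard : ∀ i : Fin s, Fintype.card (∀ j : { j // j ≠ i }, Fin (n j - 1))
      = ∏ j ∈ Finset.univ.erase i, (n j - 1) := by
    intro i
    rw [Fintype.card_pi]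
    rw [Finset.prod_subtype (Finset.univ.erase i) (p := fun j => j ≠ i)
      (fun x => by simp [Finset.mem_erase])]
    exact Finset.prod_congr rfl fun j _ => Fintype.card_fin _
  have step : ∀ i : Fin s, (PhiA (n i)).det ^ Fintype.card (∀ j : { j // j ≠ i }, Fin (n j - 1))
      = (-1 : ℤ) ^ (∏ j, (n j - 1)) := by
    intro i
    rw [det_PhiA (hn i), hcard i, ← pow_mul,
      ← Finset.mul_prod_erase Finset.univ _ (Finset.mem_univ i)]
  rw [Finset.prod_congr rfl fun i _ => step i, Finset.prod_const, Finset.card_univ,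
    Fintype.card_fin, ← pow_mul, mul_comm]

lemma chi_reverse_eq (hn : ∀ i, 2 ≤ n i) :
    (Chi n).reverse = (-1 : ℤ[X]) ^ (s * (∏ i, (n i - 1)) + ∏ i, (n i - 1)) * Chi n := by
  classical
  set A : Matrix _ _ ℤ[X] := (PhiProd n).map C with hA
  set J : Matrix _ _ ℤ[X] := (kron (fun i => flipA (n i))).map C with hJ
  have hinv : A * (J * A * J) = 1 := by
    rw [hA, hJ, ← Matrix.map_mul, ← Matrix.map_mul, ← Matrix.map_mul, phi_inv_eq]
    simp
  have hJ2 : J * J = 1 := by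
    rw [hJ, ← Matrix.map_mul, flip_sq]
    simp
  have key : (1 : Matrix _ _ ℤ[X]) - (X : ℤ[X]) • A
      = A * J * (A - (X : ℤ[X]) • (1 : Matrix _ _ ℤ[X])) * J := by
    rw [Matrix.mul_sub, Matrix.sub_mul]
    congr 1
    · rw [Matrix.mul_assoc, Matrix.mul_assoc, ← Matrix.mul_assoc J A J, hinv]
    · rw [Matrix.mul_smul, Matrix.mul_one, Matrix.smul_mul, Matrix.mul_assoc, hJ2,
        Matrix.mul_one]
  have hcard : Fintype.card ((i : Fin s) → Fin (n i - 1)) = ∏ i, (n i - 1) := by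
    rw [Fintype.card_pi]; exact Finset.prod_congr rfl fun i _ => Fintype.card_fin _
  have hchar : (X : ℤ[X]) • (1 : Matrix _ _ ℤ[X]) - A = charmatrix (PhiProd n) := by
    rw [Matrix.smul_one_eq_diagonal]
    rfl
  have hrev : (Chi n).reverse = ((1 : Matrix _ _ ℤ[X]) - (X : ℤ[X]) • A).det := by
    rw [Chi, Matrix.reverse_charpoly]
    rfl
  rw [hrev, key, Matrix.det_mul, Matrix.det_mul, Matrix.det_mul]
  have hAJ : A.det * J.det * ((A - (X : ℤ[X]) • 1).det) * J.det
      = A.det * ((A - (X : ℤ[X]) • 1).det) * (J.det * J.det) := by ring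
  rw [hAJ]
  have : J.det * J.det = 1 := by rw [← Matrix.det_mul, hJ2, Matrix.det_one]
  rw [this, mul_one]
  have hdetA : A.det = (-1 : ℤ[X]) ^ (s * ∏ i, (n i - 1)) := by
    rw [hA, ← RingHom.mapMatrix_apply, ← RingHom.map_det, det_phiProd n hn]
    simp
  have hmid : (A - (X : ℤ[X]) • 1).det = (-1 : ℤ[X]) ^ (∏ i, (n i - 1)) * Chi n := by
    have : A - (X : ℤ[X]) • 1 = -((X : ℤ[X]) • (1 : Matrix _ _ ℤ[X]) - A) := (neg_sub _ _).symm
    rw [this, Matrix.det_neg, hcard, hchar]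
    rfl
  rw [hdetA, hmid, pow_add]
  ring

lemma parity_iff (hs : 0 < s) (hn : ∀ i, 2 ≤ n i) :
    Even (s * (∏ i, (n i - 1)) + ∏ i, (n i - 1))
      ↔ Odd (Nat.gcd s (Finset.univ.gcd n)) := by
  have hA : ∀ m : ℕ, Even m ↔ 2 ∣ m :=
    fun m => ⟨fun ⟨c, hc⟩ => ⟨c, by omega⟩, fun ⟨c, hc⟩ => ⟨c, by omega⟩⟩
  have h1 : s * (∏ i, (n i - 1)) + ∏ i, (n i - 1) = (∏ i, (n i - 1)) * (s + 1) := by ring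
  rw [h1, Nat.even_mul, ← Nat.not_even_iff_odd]
  have h2 : Even (Nat.gcd s (Finset.univ.gcd n)) ↔ (2 ∣ s ∧ ∀ i, 2 ∣ n i) := by
    rw [hA]
    constructor
    · intro h
      refine ⟨h.trans (Nat.gcd_dvd_left _ _), fun i => ?_⟩
      exact (h.trans (Nat.gcd_dvd_right _ _)).trans (Finset.gcd_dvd (Finset.mem_univ i))
    · intro ⟨ha, hb⟩
      exact Nat.dvd_gcd ha (Finset.dvd_gcd fun i _ => hb i)
  rw [h2]
  have h3 : Even (∏ i, (n i - 1)) ↔ ∃ i, 2 ∣ (n i - 1) := by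
    rw [hA, Nat.prime_two.prime.dvd_finset_prod_iff]
    simp
  rw [h3, hA (s + 1)]
  constructor
  · rintro (⟨i, hi⟩ | hev) ⟨hs2, hall⟩
    · have := hall i; have := hn i; omega
    · omega
  · intro h
    by_cases hs2 : 2 ∣ s
    · by_cases hall : ∀ i, 2 ∣ n i
      · exact absurd ⟨hs2, hall⟩ h
      · push_neg at hall
        obtain ⟨i, hi⟩ := hall
        exact Or.inl ⟨i, by have := hn i; omega⟩
    · exact Or.inr (by omega)

end Main

theorem chi_reciprocal {s : ℕ} (hs : 0 < s) (n : Fin s → ℕ) (hn : ∀ i, 2 ≤ n i) :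
    ((Chi n).reverse = Chi n ∨ (Chi n).reverse = -(Chi n)) ∧
    ((Chi n).reverse = Chi n ↔ Odd (Nat.gcd s (Finset.univ.gcd n))) := by
  have hkey := chi_reverse_eq n hn
  have hne : Chi n ≠ 0 := (Matrix.charpoly_monic _).ne_zero
  set k := s * (∏ i, (n i - 1)) + ∏ i, (n i - 1) with hk
  constructor
  · rcases Nat.even_or_odd k with he | ho
    · left; rw [hkey, he.neg_one_pow, one_mul]
    · right; rw [hkey, ho.neg_one_pow, neg_one_mul]
  · constructor
    · intro h
      rcases Nat.even_or_odd k with he | ho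
      · exact (parity_iff n hs hn).mp he
      · exfalso
        rw [hkey, ho.neg_one_pow, neg_one_mul] at h
        have h2 : Chi n + Chi n = 0 := by
          nth_rewrite 1 [← h]; ring
        have : (2 : ℤ[X]) * Chi n = 0 := by rw [two_mul]; exact h2
        rcases mul_eq_zero.mp this with h' | h'
        · exact two_ne_zero (by exact_mod_cast h')
        · exact hne h'
    · intro hodd
      have he : Even k := (parity_iff n hs hn).mpr hodd
      rw [hkey, he.neg_one_pow, one_mul]
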